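/- arXiv:2603.20787 — 2 statements merged into one kernel-verified Lean document; each statement's English description precedes it below -/
import Mathlib

section
/- Let φ : S → T be a functor of finite groupoids, H : S → BG and V : T → BG functors, and ε : Ob(S) → G a function with ε(a₂)·H(s) = V(φ s)·ε(a₁) for every morphism s : a₁ → a₂ in S. Then (S, φ, id_S, ε⁻¹) is a G-span from (T,V) to (S,H) (with function a ↦ ε(a)⁻¹), and its matrix is given, for d ∈ π₀(T) and c ∈ π₀(S), by [(φ,ε⁻¹)^*](d,c) = (1/|Aut_S(c)|) · Σ_{g∈G} |{t ∈ T(d, φ(c)) : ε(c)⁻¹·V(t) = g}| · g in ℚG. -/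
open CategoryTheory

noncomputable section

/-- The component set `π₀(C)`: isomorphism classes of objects of `C`. -/
abbrev Pi0 (C : Type*) [Category C] := Quotient (isIsomorphicSetoid C)

/-- Groupoid cardinality (Euler characteristic): the sum, over a set of representatives of
the isomorphism classes of objects, of the reciprocals of the orders of the automorphism
groups. -/
noncomputable def gcard (C : Type*) [Category C] : ℚ :=
  ∑ᶠ x : Pi0 C, (Nat.card (Aut (Quotient.out x)) : ℚ)⁻¹

/-- A functor into the one-object groupoid `BG`, identified with an assignment of elements
of `G` to morphisms (composition goes to multiplication in reverse order, matching the
convention `f ≫ g ↦ g·f` of `BG`). -/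
structure GFunctor (S : Type*) [Category S] (G : Type*) [Group G] where
  map : ∀ {a b : S}, (a ⟶ b) → G
  map_id : ∀ a : S, map (𝟙 a) = 1
  map_comp : ∀ {a b c : S} (f : a ⟶ b) (g : b ⟶ c), map (f ≫ g) = map g * map f

/-- The two-sided homotopy fibre `c\M/d` of a span `S ⟵L M ⟶R T`: objects are triples
`(s, a, t)` with `s : c ⟶ L a` and `t : R a ⟶ d`; morphisms are morphisms `m : a₁ ⟶ a₂`
of `M` with `L m ∘ s₁ = s₂` and `t₂ ∘ R m = t₁`. -/
abbrev TwoFibre {S T M : Type*} [Category S] [Category T] [Category M]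
    (L : M ⥤ S) (R : M ⥤ T) (c : S) (d : T) :=
  StructuredArrow c (CostructuredArrow.proj R d ⋙ L)

/-- The induced function `c\ε/d` on the two-sided homotopy fibre:
`(s,a,t) ↦ V(t)·ε(a)·H(s)`. -/
def twoEps {S T M : Type*} [Category S] [Category T] [Category M]
    {G : Type*} [Group G] (H : GFunctor S G) (V : GFunctor T G)
    (L : M ⥤ S) (R : M ⥤ T) (ε : M → G) {c : S} {d : T}
    (x : TwoFibre L R c d) : G :=
  V.map x.right.hom * ε x.right.left * H.map x.hom

/-- The matrix `[M, ε] : π₀(S) × π₀(T) → ℚG` of a `G`-span: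
`[M,ε](c,d) = |Aut_T(d)|⁻¹ · ∑_{g ∈ G} χ((c\M/d){c\ε/d = g}) · g`. -/
noncomputable def spanMatrix {S T M : Type*} [Category S] [Category T] [Category M]
    {G : Type*} [CommGroup G] [Fintype G]
    (H : GFunctor S G) (V : GFunctor T G)
    (L : M ⥤ S) (R : M ⥤ T) (ε : M → G)
    (c : Pi0 S) (d : Pi0 T) : MonoidAlgebra ℚ G :=
  ∑ g : G, MonoidAlgebra.single g
    ((Nat.card (Aut (Quotient.out d)) : ℚ)⁻¹ *
      gcard (ObjectProperty.FullSubcategory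
        (fun x : TwoFibre L R (Quotient.out c) (Quotient.out d) =>
          twoEps H V L R ε x = g)))

/-! ### Auxiliary lemmas -/

lemma aux_finsum_one {α : Type*} [Finite α] : ∑ᶠ _ : α, (1 : ℚ) = Nat.card α := by
  haveI := Fintype.ofFinite α
  rw [finsum_eq_sum_of_fintype]
  simp [Nat.card_eq_fintype_card]

lemma gcard_eq_card_pi0 {C : Type*} [Category C] [Finite (Pi0 C)]
    (h : ∀ x : C, Subsingleton (x ⟶ x)) : gcard C = Nat.card (Pi0 C) := by
  unfold gcard
  rw [← aux_finsum_one]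
  refine finsum_congr fun x => ?_
  haveI : Subsingleton (Aut (Quotient.out x)) :=
    ⟨fun a b => Iso.ext ((h _).elim _ _)⟩
  haveI : Unique (Aut (Quotient.out x)) := uniqueOfSubsingleton (Iso.refl _)
  rw [Nat.card_unique]
  norm_num

section TF

variable {S T : Type*} [Groupoid S] [Groupoid T] {G : Type*} [CommGroup G]
  (φ : S ⥤ T) {d₀ : T} {c₀ : S}

/-- The underlying morphism `d₀ ⟶ φ c₀` of an object of the two-sided fibre of the
span `(φ, 𝟭 S)`. -/
def tfMap (x : TwoFibre φ (𝟭 S) d₀ c₀) : d₀ ⟶ φ.obj c₀ :=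
  x.hom ≫ φ.map x.right.hom

lemma tfMap_eq_of_hom {x y : TwoFibre φ (𝟭 S) d₀ c₀} (m : x ⟶ y) :
    tfMap φ x = tfMap φ y := by
  have h1 : x.hom ≫ φ.map m.right.left = y.hom := by
    have := StructuredArrow.w m
    simp only [Functor.comp_map, CostructuredArrow.proj_map] at this
    exact this
  have h2 : m.right.left ≫ y.right.hom = x.right.hom :=
    CostructuredArrow.w m.right
  unfold tfMap
  erw [← h2, φ.map_comp, ← Category.assoc, h1]
  rfl

lemma tf_hom_subsingleton (x y : TwoFibre φ (𝟭 S) d₀ c₀) :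
    Subsingleton (x ⟶ y) := by
  constructor
  intro m₁ m₂
  apply StructuredArrow.hom_ext
  apply CostructuredArrow.hom_ext
  have h1 := CostructuredArrow.w m₁.right
  have h2 := CostructuredArrow.w m₂.right
  simp only [Functor.id_map] at h1 h2
  exact (cancel_mono y.right.hom).mp (h1.trans h2.symm)

/-- A morphism of the two-sided fibre between objects with equal underlying morphisms. -/
def tfHom (x y : TwoFibre φ (𝟭 S) d₀ c₀) (h : tfMap φ x = tfMap φ y) : x ⟶ y :=
  StructuredArrow.homMk
    (CostructuredArrow.homMk (x.right.hom ≫ Groupoid.inv y.right.hom) (by simp))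
    (by
      unfold tfMap at h
      simp only [Functor.comp_map, CostructuredArrow.proj_map, CostructuredArrow.homMk_left]
      erw [φ.map_comp, ← Category.assoc, h, Category.assoc, ← φ.map_comp,
        Groupoid.comp_inv, φ.map_id]
      simp)

lemma tf_isIsomorphic (x y : TwoFibre φ (𝟭 S) d₀ c₀) (h : tfMap φ x = tfMap φ y) :
    Nonempty (x ≅ y) := by
  haveI := tf_hom_subsingleton φ x x
  haveI := tf_hom_subsingleton φ y y
  exact ⟨⟨tfHom φ x y h, tfHom φ y x h.symm, Subsingleton.elim _ _, Subsingleton.elim _ _⟩⟩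

variable (H : GFunctor S G) (V : GFunctor T G) (ε : S → G)

lemma twoEps_eq (hε : ∀ {a b : S} (s : a ⟶ b), ε b * H.map s = V.map (φ.map s) * ε a)
    (x : TwoFibre φ (𝟭 S) d₀ c₀) :
    twoEps V H φ (𝟭 S) (fun a => (ε a)⁻¹) x = (ε c₀)⁻¹ * V.map (tfMap φ x) := by
  unfold twoEps tfMap
  rw [V.map_comp]
  have h : ε c₀ * H.map x.right.hom = V.map (φ.map x.right.hom) * ε x.right.left :=
    hε (a := x.right.left) (b := c₀) x.right.hom
  have h2 : V.map (φ.map x.right.hom) = ε c₀ * H.map x.right.hom * (ε x.right.left)⁻¹ := by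
    rw [h, mul_inv_cancel_right]
  rw [show (H.map x.right.hom : G) = H.map (a := x.right.left) (b := c₀) x.right.hom from rfl]
  erw [h2]
  group

end TF

/-- For a functor `φ : S ⥤ T` of finite groupoids with `H : S → BG`, `V : T → BG` and a
natural transformation `ε : H ⟹ V∘φ` (a function `ε : Ob(S) → G` with
`ε(a₂)·H(s) = V(φ s)·ε(a₁)` for every `s : a₁ ⟶ a₂`), the data `(S, φ, 𝟭 S, ε⁻¹)` is a
`G`-span from `(T,V)` to `(S,H)` and its matrix is
`[(φ,ε⁻¹)^*](d,c) = |Aut_S(c)|⁻¹ · ∑_{g∈G} |{t ∈ T(d,φ(c)) : ε(c)⁻¹·V(t) = g}| · g`. -/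
theorem stmt6 {S T : Type*} [Groupoid S] [Groupoid T]
    [Finite S] [∀ a b : S, Finite (a ⟶ b)]
    [Finite T] [∀ a b : T, Finite (a ⟶ b)]
    {G : Type*} [CommGroup G] [Fintype G]
    (φ : S ⥤ T) (H : GFunctor S G) (V : GFunctor T G) (ε : S → G)
    (hε : ∀ {a b : S} (s : a ⟶ b), ε b * H.map s = V.map (φ.map s) * ε a) :
    (∀ {a b : S} (m : a ⟶ b),
        (ε b)⁻¹ * V.map (φ.map m) = H.map ((𝟭 S).map m) * (ε a)⁻¹) ∧
      ∀ (d : Pi0 T) (c : Pi0 S),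
        spanMatrix V H φ (𝟭 S) (fun a => (ε a)⁻¹) d c =
          ∑ g : G, MonoidAlgebra.single g
            ((Nat.card (Aut (Quotient.out c)) : ℚ)⁻¹ *
              (Nat.card {t : Quotient.out d ⟶ φ.obj (Quotient.out c) //
                (ε (Quotient.out c))⁻¹ * V.map t = g} : ℚ)) := by
  constructor
  · intro a b m
    simp only [Functor.id_map]
    rw [inv_mul_eq_iff_eq_mul, ← mul_assoc, hε m, mul_inv_cancel_right]
  · intro d c
    unfold spanMatrix
    refine Finset.sum_congr rfl fun g _ => ?_
    congr 2
    set d₀ := Quotient.out d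
    set c₀ := Quotient.out c
    set N := ObjectProperty.FullSubcategory
      (fun x : TwoFibre φ (𝟭 S) d₀ c₀ =>
        twoEps V H φ (𝟭 S) (fun a => (ε a)⁻¹) x = g) with hN
    -- the map to the subtype
    have hFwd : ∀ x : N, (ε c₀)⁻¹ * V.map (tfMap φ x.obj) = g := fun x =>
      (twoEps_eq φ H V ε hε x.obj).symm.trans x.property
    let Fb : N → {t : d₀ ⟶ φ.obj c₀ // (ε c₀)⁻¹ * V.map t = g} :=
      fun x => ⟨tfMap φ x.obj, hFwd x⟩
    have hwd : ∀ x y : N, Nonempty (x ≅ y) → Fb x = Fb y := by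
      intro x y hxy
      obtain ⟨i⟩ := hxy
      have m : x.obj ⟶ y.obj := i.hom.hom
      exact Subtype.ext (tfMap_eq_of_hom φ m)
    let Fq : Pi0 N → {t : d₀ ⟶ φ.obj c₀ // (ε c₀)⁻¹ * V.map t = g} :=
      Quotient.lift Fb hwd
    have hinj : Function.Injective Fq := by
      intro x y
      refine Quotient.inductionOn₂ x y ?_
      intro a b hab
      apply Quotient.sound
      have hiso := tf_isIsomorphic φ a.obj b.obj (congrArg Subtype.val hab)
      obtain ⟨i⟩ := hiso
      exact ⟨ObjectProperty.isoMk _ i⟩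
    have hsurj : Function.Surjective Fq := by
      rintro ⟨t, ht⟩
      refine ⟨Quotient.mk _ (⟨StructuredArrow.mk
        (Y := CostructuredArrow.mk (𝟙 c₀)) t, ?_⟩ : N), ?_⟩
      · rw [twoEps_eq φ H V ε hε]
        show (ε c₀)⁻¹ * V.map (t ≫ φ.map (𝟙 c₀)) = g
        rw [φ.map_id, Category.comp_id, ht]
      · apply Subtype.ext
        show tfMap φ _ = t
        unfold tfMap
        show t ≫ φ.map (𝟙 c₀) = t
        rw [φ.map_id, Category.comp_id]
    let e : Pi0 N ≃ {t : d₀ ⟶ φ.obj c₀ // (ε c₀)⁻¹ * V.map t = g} :=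
      Equiv.ofBijective Fq ⟨hinj, hsurj⟩
    haveI : Finite (Pi0 N) := Finite.of_equiv _ e.symm
    have hsub : ∀ x : N, Subsingleton (x ⟶ x) := fun x =>
      ⟨fun a b => ObjectProperty.hom_ext _ ((tf_hom_subsingleton φ x.obj x.obj).elim _ _)⟩
    rw [gcard_eq_card_pi0 hsub, Nat.card_congr e]

end
end

section
/- Let (M, L, R, ε) be a G-span from (S, H) to (T, V). Then for all c ∈ π₀(S) and d ∈ π₀(T), the matrix entry lies in the corner of the group ring cut out by the averaging idempotents of the automorphism images: [M,ε](c,d) ∈ overline{V(Aut_T(d))} · ℚG · overline{H(Aut_S(c))}, equivalently overline{V(Aut_T(d))}·[M,ε](c,d)·overline{H(Aut_S(c))} = [M,ε](c,d), where overline{U} = |U|⁻¹ Σ_{u∈U} u for a subgroup U of G. -/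
open CategoryTheory

noncomputable section

/-- The bijection on isomorphism classes induced by an equivalence of categories. -/
def pi0Equiv {C D : Type*} [Category C] [Category D] (F : C ≌ D) : Pi0 C ≃ Pi0 D where
  toFun := Quotient.map F.functor.obj (fun _ _ h => h.elim fun i => ⟨F.functor.mapIso i⟩)
  invFun := Quotient.map F.inverse.obj (fun _ _ h => h.elim fun i => ⟨F.inverse.mapIso i⟩)
  left_inv := by
    intro x
    induction x using Quotient.inductionOn with
    | h a => exact Quotient.sound ⟨(F.unitIso.app a).symm⟩
  right_inv := by
    intro x
    induction x using Quotient.inductionOn with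
    | h a => exact Quotient.sound ⟨F.counitIso.app a⟩

lemma card_aut_congr {C : Type*} [Category C] {a b : C} (i : a ≅ b) :
    Nat.card (Aut a) = Nat.card (Aut b) :=
  Nat.card_congr (Aut.autMulEquivOfIso i).toEquiv

lemma gcard_congr {C D : Type*} [Category C] [Category D] (F : C ≌ D) :
    gcard C = gcard D := by
  unfold gcard
  rw [← finsum_comp_equiv (pi0Equiv F)]
  apply finsum_congr
  intro x
  congr 1
  have h1 : Nat.card (Aut (Quotient.out x)) =
      Nat.card (Aut (F.functor.obj (Quotient.out x))) :=
    Nat.card_congr (F.fullyFaithfulFunctor.autMulEquivOfFullyFaithful (Quotient.out x)).toEquiv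
  have h2 : pi0Equiv F x = Quotient.mk _ (F.functor.obj (Quotient.out x)) := by
    conv_lhs => rw [← Quotient.out_eq x]
    rfl
  have h3 : Nonempty (F.functor.obj (Quotient.out x) ≅ Quotient.out (pi0Equiv F x)) := by
    have := Quotient.mk_out (s := isIsomorphicSetoid D) (F.functor.obj (Quotient.out x))
    rw [← h2] at this
    obtain ⟨i⟩ := this
    exact ⟨i.symm⟩
  rw [h1, card_aut_congr h3.some]


section Shift

variable {S T M : Type*} [Category S] [Category T] [Category M]
    {G : Type*} [CommGroup G] (H : GFunctor S G) (V : GFunctor T G)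
    (L : M ⥤ S) (R : M ⥤ T) (ε : M → G) {c₀ : S} {d₀ : T}

lemma GFunctor.map_inv {S G : Type*} [Category S] [Group G] (H : GFunctor S G)
    {a b : S} (i : a ≅ b) : H.map i.inv = (H.map i.hom)⁻¹ := by
  have h := H.map_comp i.hom i.inv
  rw [i.hom_inv_id, H.map_id] at h
  exact eq_inv_of_mul_eq_one_left h.symm

/-- Shifting a two-sided fibre by automorphisms of the feet. -/
def shiftFun (fc : (c₀ ≅ c₀)) (fd : (d₀ ≅ d₀)) : TwoFibre L R c₀ d₀ ⥤ TwoFibre L R c₀ d₀ where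
  obj x := StructuredArrow.mk (Y := CostructuredArrow.mk (x.right.hom ≫ fd.hom)) (fc.hom ≫ x.hom)
  map {x y} m :=
    StructuredArrow.homMk (CostructuredArrow.homMk m.right.left
      (by dsimp; rw [← Category.assoc, CostructuredArrow.w]))
      (by
        have := StructuredArrow.w m
        dsimp at this ⊢
        exact (Category.assoc _ _ _).trans (congrArg (fc.hom ≫ ·) this))

lemma shiftFun_twoEps (fc : (c₀ ≅ c₀)) (fd : (d₀ ≅ d₀)) (x : TwoFibre L R c₀ d₀) :
    twoEps H V L R ε ((shiftFun L R fc fd).obj x) =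
      V.map fd.hom * twoEps H V L R ε x * H.map fc.hom := by
  dsimp [twoEps, shiftFun]
  rw [V.map_comp]
  erw [H.map_comp]
  simp [mul_comm, mul_assoc, mul_left_comm]
  rfl

/-- An iso between a fibre point and its double shift. -/
def shiftShiftIso (fc : (c₀ ≅ c₀)) (fd : (d₀ ≅ d₀)) (x : TwoFibre L R c₀ d₀) :
    (shiftFun L R fc.symm fd.symm).obj ((shiftFun L R fc fd).obj x) ≅ x :=
  StructuredArrow.isoMk (CostructuredArrow.isoMk (Iso.refl _) (by simp [shiftFun]))
    (by simp [shiftFun]; erw [L.map_id, Category.comp_id])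

lemma shiftShift_nat_inv (fc : (c₀ ≅ c₀)) (fd : (d₀ ≅ d₀)) {x y : TwoFibre L R c₀ d₀} (f : x ⟶ y) :
    f ≫ (shiftShiftIso L R fc fd y).inv =
      (shiftShiftIso L R fc fd x).inv ≫
        (shiftFun L R fc.symm fd.symm).map ((shiftFun L R fc fd).map f) := by
  apply StructuredArrow.hom_ext
  apply CostructuredArrow.hom_ext
  simp [shiftShiftIso, shiftFun]

lemma shiftShift_nat_hom (fc : (c₀ ≅ c₀)) (fd : (d₀ ≅ d₀)) {x y : TwoFibre L R c₀ d₀} (f : x ⟶ y) :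
    (shiftFun L R fc.symm fd.symm).map ((shiftFun L R fc fd).map f) ≫
        (shiftShiftIso L R fc fd y).hom =
      (shiftShiftIso L R fc fd x).hom ≫ f := by
  apply StructuredArrow.hom_ext
  apply CostructuredArrow.hom_ext
  simp [shiftShiftIso, shiftFun]

variable {P : TwoFibre L R c₀ d₀ → Prop}

/-- Lift an iso of underlying objects to a full subcategory. -/
def fsIso {C : Type*} [Category C] {P : C → Prop} {X Y : ObjectProperty.FullSubcategory P}
    (i : X.obj ≅ Y.obj) : X ≅ Y :=
  ObjectProperty.isoMk _ i

set_option maxHeartbeats 1000000 in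
/-- Shifting gives an equivalence of fibre subgroupoids. -/
def shiftEquiv (fc : (c₀ ≅ c₀)) (fd : (d₀ ≅ d₀)) (g : G) :
    ObjectProperty.FullSubcategory (fun x : TwoFibre L R c₀ d₀ => twoEps H V L R ε x = g) ≌
    ObjectProperty.FullSubcategory (fun x : TwoFibre L R c₀ d₀ =>
      twoEps H V L R ε x = V.map fd.hom * g * H.map fc.hom) :=
  CategoryTheory.Equivalence.mk
    (ObjectProperty.lift
      (fun x : TwoFibre L R c₀ d₀ => twoEps H V L R ε x = V.map fd.hom * g * H.map fc.hom)
      (ObjectProperty.ι _ ⋙ shiftFun L R fc fd)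
      (fun x => by
        dsimp
        rw [shiftFun_twoEps H V L R ε fc fd, x.2]))
    (ObjectProperty.lift
      (fun x : TwoFibre L R c₀ d₀ => twoEps H V L R ε x = g)
      (ObjectProperty.ι _ ⋙ shiftFun L R fc.symm fd.symm)
      (fun x => by
        dsimp
        rw [shiftFun_twoEps H V L R ε fc.symm fd.symm, x.2]
        simp only [Iso.symm_hom, V.map_inv, H.map_inv]
        group))
    (NatIso.ofComponents (fun X => fsIso (shiftShiftIso L R fc fd X.obj).symm)
      (fun {X Y} f => by apply InducedCategory.hom_ext; exact shiftShift_nat_inv L R fc fd f.hom))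
    (NatIso.ofComponents (fun X => fsIso (shiftShiftIso L R fc.symm fd.symm X.obj))
      (fun {X Y} f => by apply InducedCategory.hom_ext; exact shiftShift_nat_hom L R fc.symm fd.symm f.hom))

end Shift

noncomputable def kappa {S T M : Type*} [Category S] [Category T] [Category M]
    {G : Type*} [CommGroup G] [Fintype G]
    (H : GFunctor S G) (V : GFunctor T G)
    (L : M ⥤ S) (R : M ⥤ T) (ε : M → G)
    (c : Pi0 S) (d : Pi0 T) (g : G) : ℚ :=
  (Nat.card (Aut (Quotient.out d)) : ℚ)⁻¹ *
    gcard (ObjectProperty.FullSubcategory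
      (fun x : TwoFibre L R (Quotient.out c) (Quotient.out d) =>
        twoEps H V L R ε x = g))

lemma spanMatrix_eq {S T M : Type*} [Category S] [Category T] [Category M]
    {G : Type*} [CommGroup G] [Fintype G]
    (H : GFunctor S G) (V : GFunctor T G)
    (L : M ⥤ S) (R : M ⥤ T) (ε : M → G)
    (c : Pi0 S) (d : Pi0 T) :
    spanMatrix H V L R ε c d =
      ∑ g : G, MonoidAlgebra.single g (kappa H V L R ε c d g) := rfl

lemma kappa_shift {S T M : Type*} [Category S] [Category T] [Category M]
    {G : Type*} [CommGroup G] [Fintype G]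
    (H : GFunctor S G) (V : GFunctor T G)
    (L : M ⥤ S) (R : M ⥤ T) (ε : M → G)
    (c : Pi0 S) (d : Pi0 T)
    (fc : Aut (Quotient.out c)) (fd : Aut (Quotient.out d)) (g : G) :
    kappa H V L R ε c d (V.map fd.hom * g * H.map fc.hom) = kappa H V L R ε c d g := by
  unfold kappa
  rw [← gcard_congr (shiftEquiv H V L R ε fc fd g)]

/-- For a `G`-span `(M,L,R,ε)` from `(S,H)` to `(T,V)`, every matrix entry lies in the
corner of the group ring cut out by the averaging idempotents
`overline{V(Aut_T(d))}` and `overline{H(Aut_S(c))}`: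
`overline{V(Aut_T(d))}·[M,ε](c,d)·overline{H(Aut_S(c))} = [M,ε](c,d)`,
where `overline{U} = |U|⁻¹ ∑_{u∈U} u`. -/
theorem stmt9 {S T M : Type*} [Groupoid S] [Groupoid T] [Groupoid M]
    [Finite S] [∀ a b : S, Finite (a ⟶ b)]
    [Finite T] [∀ a b : T, Finite (a ⟶ b)]
    [Finite M] [∀ a b : M, Finite (a ⟶ b)]
    {G : Type*} [CommGroup G] [Fintype G]
    (H : GFunctor S G) (V : GFunctor T G)
    (L : M ⥤ S) (R : M ⥤ T) (ε : M → G)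
    (hε : ∀ {a b : M} (m : a ⟶ b), ε b * H.map (L.map m) = V.map (R.map m) * ε a)
    (c : Pi0 S) (d : Pi0 T) :
    ((Nat.card (Set.range fun f : Aut (Quotient.out d) => V.map f.hom) : ℚ)⁻¹ •
          ∑ᶠ u : Set.range (fun f : Aut (Quotient.out d) => V.map f.hom),
            MonoidAlgebra.of ℚ G (u : G)) *
        spanMatrix H V L R ε c d *
        ((Nat.card (Set.range fun f : Aut (Quotient.out c) => H.map f.hom) : ℚ)⁻¹ •
          ∑ᶠ u : Set.range (fun f : Aut (Quotient.out c) => H.map f.hom),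
            MonoidAlgebra.of ℚ G (u : G)) =
      spanMatrix H V L R ε c d := by
  classical
  haveI : Fintype ↥(Set.range fun f : Aut (Quotient.out d) => V.map f.hom) :=
    Fintype.ofFinite _
  haveI : Fintype ↥(Set.range fun f : Aut (Quotient.out c) => H.map f.hom) :=
    Fintype.ofFinite _
  haveI hnev : Nonempty ↥(Set.range fun f : Aut (Quotient.out d) => V.map f.hom) :=
    ⟨⟨_, ⟨Iso.refl _, rfl⟩⟩⟩
  haveI hneh : Nonempty ↥(Set.range fun f : Aut (Quotient.out c) => H.map f.hom) :=
    ⟨⟨_, ⟨Iso.refl _, rfl⟩⟩⟩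
  have key : ∀ u ∈ Set.range (fun f : Aut (Quotient.out d) => V.map f.hom),
      ∀ w ∈ Set.range (fun f : Aut (Quotient.out c) => H.map f.hom),
      (∑ g : G, MonoidAlgebra.single (u * g * w) (kappa H V L R ε c d g))
        = ∑ g : G, MonoidAlgebra.single g (kappa H V L R ε c d g) := by
    rintro u ⟨fd, rfl⟩ w ⟨fc, rfl⟩
    calc
      (∑ g : G, MonoidAlgebra.single (V.map fd.hom * g * H.map fc.hom)
          (kappa H V L R ε c d g))
          = ∑ g : G, MonoidAlgebra.single (V.map fd.hom * g * H.map fc.hom)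
              (kappa H V L R ε c d (V.map fd.hom * g * H.map fc.hom)) := by
            refine Finset.sum_congr rfl fun g _ => ?_
            rw [kappa_shift H V L R ε c d fc fd g]
      _ = ∑ g : G, MonoidAlgebra.single g (kappa H V L R ε c d g) :=
            Fintype.sum_equiv
              ((Equiv.mulLeft (V.map fd.hom)).trans (Equiv.mulRight (H.map fc.hom)))
              _ _ (fun g => rfl)
  rw [finsum_eq_sum_of_fintype, finsum_eq_sum_of_fintype, spanMatrix_eq H V L R ε c d,
    smul_mul_assoc, smul_mul_assoc, mul_smul_comm, smul_smul]
  have expand :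
      ((∑ u : ↥(Set.range fun f : Aut (Quotient.out d) => V.map f.hom),
          MonoidAlgebra.of ℚ G (u : G)) *
        (∑ g : G, MonoidAlgebra.single g (kappa H V L R ε c d g)) *
        ∑ w : ↥(Set.range fun f : Aut (Quotient.out c) => H.map f.hom),
          MonoidAlgebra.of ℚ G (w : G))
      = ((Fintype.card ↥(Set.range fun f : Aut (Quotient.out d) => V.map f.hom) *
          Fintype.card ↥(Set.range fun f : Aut (Quotient.out c) => H.map f.hom) : ℕ) : ℚ) •
        ∑ g : G, MonoidAlgebra.single g (kappa H V L R ε c d g) := by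
    simp only [Finset.sum_mul, Finset.mul_sum, MonoidAlgebra.of_apply,
      MonoidAlgebra.single_mul_single, one_mul, mul_one]
    calc
      (∑ w : ↥(Set.range fun f : Aut (Quotient.out c) => H.map f.hom), ∑ g : G,
          ∑ u : ↥(Set.range fun f : Aut (Quotient.out d) => V.map f.hom),
            MonoidAlgebra.single ((u : G) * g * (w : G)) (kappa H V L R ε c d g))
          = ∑ _w : ↥(Set.range fun f : Aut (Quotient.out c) => H.map f.hom),
              ∑ _u : ↥(Set.range fun f : Aut (Quotient.out d) => V.map f.hom),
                ∑ g : G, MonoidAlgebra.single g (kappa H V L R ε c d g) := by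
            refine Finset.sum_congr rfl fun w _ => ?_
            rw [Finset.sum_comm]
            exact Finset.sum_congr rfl fun u _ => key u u.2 w w.2
      _ = ((Fintype.card ↥(Set.range fun f : Aut (Quotient.out d) => V.map f.hom) *
            Fintype.card ↥(Set.range fun f : Aut (Quotient.out c) => H.map f.hom) : ℕ) : ℚ) •
          ∑ g : G, MonoidAlgebra.single g (kappa H V L R ε c d g) := by
            simp only [Finset.sum_const, Finset.card_univ, smul_smul]
            rw [← Nat.cast_smul_eq_nsmul ℚ]
            congr 1
            push_cast
            ring
  rw [expand, smul_smul]
  have hv : ((Nat.card ↥(Set.range fun f : Aut (Quotient.out d) => V.map f.hom)) : ℚ) ≠ 0 := by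
    exact_mod_cast Nat.card_pos.ne'
  have hh : ((Nat.card ↥(Set.range fun f : Aut (Quotient.out c) => H.map f.hom)) : ℚ) ≠ 0 := by
    exact_mod_cast Nat.card_pos.ne'
  have h1 : ((Nat.card ↥(Set.range fun f : Aut (Quotient.out d) => V.map f.hom)) : ℚ)⁻¹ *
      ((Nat.card ↥(Set.range fun f : Aut (Quotient.out c) => H.map f.hom)) : ℚ)⁻¹ *
      ((Fintype.card ↥(Set.range fun f : Aut (Quotient.out d) => V.map f.hom) *
        Fintype.card ↥(Set.range fun f : Aut (Quotient.out c) => H.map f.hom) : ℕ) : ℚ) = 1 := by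
    rw [Nat.card_eq_fintype_card, Nat.card_eq_fintype_card] at *
    push_cast
    field_simp
  rw [h1, one_smul]


end
end
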